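/- arXiv:1711.02705 — 6 statements merged into one kernel-verified Lean document; each statement's English description precedes it below -/
import Mathlib

section
/- Let B be a real d × N matrix. Then ρ(B) = r(B) if and only if the row space Row(B) ⊆ ℝ^N is a rational subspace. Here ρ(B) is the rank of the additive subgroup of ℝ^d generated by the columns of B (equivalently, the dimension over ℚ of the ℚ-linear span of the columns), r(B) is the rank of the matrix B (the dimension of the ℝ-linear span of its columns, equal to dim Row(B)), and a linear subspace of ℝ^N is called rational if it is spanned by vectors all of whose coordinates are rational. -/
/-- `ρ(M)`: the rank of the additive subgroup of `ℝ^d` generated by the columns of the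
real `d × N` matrix `M`, i.e. the dimension over `ℚ` of the `ℚ`-linear span of the
columns of `M` inside `ℝ^d` viewed as a `ℚ`-vector space. -/
noncomputable def latticeRank {d N : ℕ} (M : Matrix (Fin d) (Fin N) ℝ) : ℕ :=
  Module.finrank ℚ
    (Submodule.span ℚ (Set.range fun j : Fin N => fun i : Fin d => M i j))

/-- A linear subspace of `ℝ^N` is rational if it is spanned by vectors all of whose
coordinates are rational. -/
def IsRationalSubspace {N : ℕ} (L : Submodule ℝ (Fin N → ℝ)) : Prop :=
  ∃ S : Set (Fin N → ℚ),
    L = Submodule.span ℝ ((fun v : Fin N → ℚ => fun i => (v i : ℝ)) '' S)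

open Set Submodule Module

private lemma ratSmul_inj' : Function.Injective fun q : ℚ => q • (1 : ℝ) := by
  intro a b hab
  have : (a : ℝ) = (b : ℝ) := by simpa [Rat.smul_def] using hab
  exact_mod_cast this

/-- The matrix rank is always at most the lattice rank. -/
private lemma rank_le_latticeRank' {d N : ℕ} (B : Matrix (Fin d) (Fin N) ℝ) :
    B.rank ≤ latticeRank B := by
  classical
  set col : Fin N → (Fin d → ℝ) := fun j i => B i j with hcol
  obtain ⟨s, hs_sub, hs_span, hs_ind⟩ := exists_linearIndependent ℝ (Set.range col)
  have hsfin : s.Finite := hs_ind.setFinite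
  haveI := hsfin.fintype
  have hrange : Set.range B.col = Set.range col := rfl
  have h1 : B.rank = s.toFinset.card := by
    rw [Matrix.rank_eq_finrank_span_cols, hrange, ← hs_span,
      finrank_span_set_eq_card hs_ind]
  have hindQ : LinearIndependent ℚ ((↑) : s → (Fin d → ℝ)) :=
    hs_ind.restrict_scalars ratSmul_inj'
  haveI : FiniteDimensional ℚ (Submodule.span ℚ (Set.range col)) :=
    FiniteDimensional.span_of_finite ℚ (Set.finite_range col)
  calc B.rank = s.toFinset.card := h1
    _ = finrank ℚ (span ℚ s) := (finrank_span_set_eq_card hindQ).symm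
    _ ≤ finrank ℚ (span ℚ (Set.range col)) :=
        Submodule.finrank_mono (span_mono hs_sub)
    _ = latticeRank B := rfl

/-- If the row space is rational, the lattice rank is at most the matrix rank. -/
private lemma latticeRank_le_rank_of_rational' {d N : ℕ} (B : Matrix (Fin d) (Fin N) ℝ)
    (h : IsRationalSubspace (Submodule.span ℝ (Set.range fun i : Fin d => B i))) :
    latticeRank B ≤ B.rank := by
  classical
  obtain ⟨S, hS⟩ := h
  set cst : (Fin N → ℚ) → (Fin N → ℝ) := fun v i => (v i : ℝ) with hcst
  obtain ⟨s, hs_sub, hs_span, hs_ind⟩ := exists_linearIndependent ℝ (cst '' S)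
  have hsfin : s.Finite := hs_ind.setFinite
  haveI := hsfin.fintype
  set m := Fintype.card s with hm
  have hrange : Set.range B.row = Set.range (fun i : Fin d => B i) := rfl
  have hrank : B.rank = m := by
    rw [Matrix.rank_eq_finrank_span_row, hrange, hS, ← hs_span,
      finrank_span_set_eq_card hs_ind, Set.toFinset_card]
  set v : Fin m → (Fin N → ℝ) := fun k => ((Fintype.equivFin s).symm k : Fin N → ℝ) with hv
  have hvrange : Set.range v = s := by
    rw [show v = Subtype.val ∘ (Fintype.equivFin s).symm from rfl,
      (Fintype.equivFin s).symm.surjective.range_comp, Subtype.range_coe]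
  have hq : ∀ k, ∃ qv : Fin N → ℚ, cst qv = v k := by
    intro k
    have : v k ∈ cst '' S := hs_sub (by rw [← hvrange]; exact ⟨k, rfl⟩)
    obtain ⟨qv, -, hqv⟩ := this
    exact ⟨qv, hqv⟩
  choose q hqv using hq
  have hrow : ∀ i, B i ∈ span ℝ (Set.range v) := by
    intro i
    rw [hvrange, hs_span, ← hS]
    exact subset_span ⟨i, rfl⟩
  choose a ha using fun i => (mem_span_range_iff_exists_fun ℝ).mp (hrow i)
  set w : Fin m → (Fin d → ℝ) := fun k i => a i k with hw
  have hKle : span ℚ (Set.range fun j : Fin N => fun i : Fin d => B i j)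
      ≤ span ℚ (Set.range w) := by
    rw [span_le]
    rintro _ ⟨j, rfl⟩
    rw [SetLike.mem_coe, mem_span_range_iff_exists_fun]
    refine ⟨fun k => q k j, ?_⟩
    funext i
    have hb := congrFun (ha i) j
    simp only [Finset.sum_apply, Pi.smul_apply, smul_eq_mul] at hb
    have hvq : ∀ k, v k j = (q k j : ℝ) := fun k => (congrFun (hqv k) j).symm
    simp only [Finset.sum_apply, Pi.smul_apply, Rat.smul_def, hw]
    calc ∑ k, (q k j : ℝ) * a i k = ∑ k, a i k * v k j := by
          refine Finset.sum_congr rfl fun k _ => ?_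
          rw [hvq k, mul_comm]
      _ = B i j := hb
  haveI : FiniteDimensional ℚ (Submodule.span ℚ (Set.range w)) :=
    FiniteDimensional.span_of_finite ℚ (Set.finite_range w)
  calc latticeRank B ≤ finrank ℚ (span ℚ (Set.range w)) := Submodule.finrank_mono hKle
    _ ≤ Fintype.card (Fin m) := finrank_range_le_card w
    _ = m := Fintype.card_fin m
    _ = B.rank := hrank.symm

/-- If the lattice rank equals the matrix rank, the row space is rational. -/
private lemma rational_of_latticeRank_eq_rank' {d N : ℕ} (B : Matrix (Fin d) (Fin N) ℝ)
    (h : latticeRank B = B.rank) :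
    IsRationalSubspace (Submodule.span ℝ (Set.range fun i : Fin d => B i)) := by
  classical
  set col : Fin N → (Fin d → ℝ) := fun j i => B i j with hcol
  obtain ⟨s, hs_sub, hs_span, hs_ind⟩ := exists_linearIndependent ℝ (Set.range col)
  have hsfin : s.Finite := hs_ind.setFinite
  haveI := hsfin.fintype
  set m := Fintype.card s with hm
  have hrange : Set.range B.col = Set.range col := rfl
  have hrank : B.rank = m := by
    rw [Matrix.rank_eq_finrank_span_cols, hrange, ← hs_span,
      finrank_span_set_eq_card hs_ind, Set.toFinset_card]
  have hindQ : LinearIndependent ℚ ((↑) : s → (Fin d → ℝ)) :=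
    hs_ind.restrict_scalars ratSmul_inj'
  haveI : FiniteDimensional ℚ (Submodule.span ℚ (Set.range col)) :=
    FiniteDimensional.span_of_finite ℚ (Set.finite_range col)
  -- the ℚ-span of s is the whole lattice span
  have hspanQ : Submodule.span ℚ s = Submodule.span ℚ (Set.range col) := by
    apply Submodule.eq_of_le_of_finrank_le (span_mono hs_sub)
    rw [finrank_span_set_eq_card hindQ, Set.toFinset_card]
    have : finrank ℚ (Submodule.span ℚ (Set.range col)) = latticeRank B := rfl
    rw [this, h, hrank]
  -- enumerate s
  set u : Fin m → (Fin d → ℝ) := fun k => ((Fintype.equivFin s).symm k : Fin d → ℝ) with hu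
  have hurange : Set.range u = s := by
    rw [show u = Subtype.val ∘ (Fintype.equivFin s).symm from rfl,
      (Fintype.equivFin s).symm.surjective.range_comp, Subtype.range_coe]
  have hcolmem : ∀ j, col j ∈ span ℚ (Set.range u) := by
    intro j
    rw [hurange, hspanQ]
    exact subset_span ⟨j, rfl⟩
  choose q hq using fun j => (mem_span_range_iff_exists_fun ℚ).mp (hcolmem j)
  -- rational row vectors
  set w : Fin m → (Fin N → ℚ) := fun k j => q j k with hw
  set cst : (Fin N → ℚ) → (Fin N → ℝ) := fun v i => (v i : ℝ) with hcst
  have key : ∀ i, B i = ∑ k, u k i • cst (w k) := by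
    intro i
    funext j
    have hb := congrFun (hq j) i
    simp only [Finset.sum_apply, Pi.smul_apply, Rat.smul_def] at hb
    simp only [Finset.sum_apply, Pi.smul_apply, smul_eq_mul, hcst, hw]
    calc B i j = col j i := rfl
      _ = ∑ k, (q j k : ℝ) * u k i := hb.symm
      _ = ∑ k, u k i * (q j k : ℝ) := by
          exact Finset.sum_congr rfl fun k _ => mul_comm _ _
  have hle : Submodule.span ℝ (Set.range fun i : Fin d => B i)
      ≤ Submodule.span ℝ (Set.range (cst ∘ w)) := by
    rw [span_le]
    rintro _ ⟨i, rfl⟩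
    rw [SetLike.mem_coe, mem_span_range_iff_exists_fun]
    exact ⟨fun k => u k i, (key i).symm⟩
  have heq : Submodule.span ℝ (Set.range fun i : Fin d => B i)
      = Submodule.span ℝ (Set.range (cst ∘ w)) := by
    apply Submodule.eq_of_le_of_finrank_le hle
    have h1 : finrank ℝ (Submodule.span ℝ (Set.range (cst ∘ w))) ≤ m :=
      (finrank_range_le_card (cst ∘ w)).trans (Fintype.card_fin m).le
    have h2 : finrank ℝ (Submodule.span ℝ (Set.range fun i : Fin d => B i)) = m := by
      have := Matrix.rank_eq_finrank_span_row B
      rw [hrank] at this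
      exact this.symm
    omega
  exact ⟨Set.range w, by rw [heq, ← Set.range_comp]⟩

/-- For a real `d × N` matrix `B`, the lattice rank `ρ(B)` equals the
matrix rank `r(B)` if and only if the row space of `B` is a rational subspace of `ℝ^N`. -/
theorem latticeRank_eq_rank_iff_rowSpace_rational {d N : ℕ}
    (B : Matrix (Fin d) (Fin N) ℝ) :
    latticeRank B = B.rank ↔
      IsRationalSubspace (Submodule.span ℝ (Set.range fun i : Fin d => B i)) := by
  constructor
  · exact rational_of_latticeRank_eq_rank' B
  · intro h
    exact le_antisymm (latticeRank_le_rank_of_rational' B h) (rank_le_latticeRank' B)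
end

section
/- Let A be a real d × N matrix with row space Row(A) ⊆ ℝ^N, and let ρ(A) denote the rank of the additive subgroup of ℝ^d generated by the columns of A. Then there exists a unique linear subspace L̂ of ℝ^N such that: (i) L̂ is a rational subspace (spanned by vectors in ℚ^N); (ii) Row(A) ⊆ L̂; and (iii) dim L̂ = ρ(A). Moreover, L̂ satisfies the universal property that every rational subspace of ℝ^N containing Row(A) contains L̂; that is, L̂ is the unique minimal rational lift of A, and every rational lift of A is a lift of L̂. -/
namespace RatLiftAux

open Module Submodule Set Matrix

variable {N : ℕ}

/-- The coercion `ℚ^N → ℝ^N` as a `ℚ`-linear map. -/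
noncomputable def coeL (N : ℕ) : (Fin N → ℚ) →ₗ[ℚ] (Fin N → ℝ) where
  toFun v := fun i => (v i : ℝ)
  map_add' x y := by funext i; simp
  map_smul' c x := by
    funext i
    simp [Pi.smul_apply, Rat.smul_def]

@[simp] theorem coeL_apply (v : Fin N → ℚ) (i : Fin N) : coeL N v i = (v i : ℝ) := rfl

/-- `ℚ`-linearly independent rational vectors are `ℝ`-linearly independent. -/
theorem linindep_coe {k : ℕ} {b : Fin k → (Fin N → ℚ)}
    (hb : LinearIndependent ℚ b) :
    LinearIndependent ℝ (fun s => coeL N (b s)) := by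
  classical
  set B : Matrix (Fin k) (Fin N) ℚ := Matrix.of b with hB
  have hrank : B.rank = k := by
    simpa using hb.rank_matrix (M := B)
  have hsurj : LinearMap.range B.mulVecLin = ⊤ := by
    apply Submodule.eq_top_of_finrank_eq
    rw [show Module.finrank ℚ (LinearMap.range B.mulVecLin) = B.rank from rfl, hrank]
    simp [Module.finrank_pi]
  obtain ⟨g, hg⟩ := B.mulVecLin.exists_rightInverse_of_surjective hsurj
  set C : Matrix (Fin N) (Fin k) ℚ := LinearMap.toMatrix' g with hC
  have hBC : B * C = 1 := by
    have h1 : (B * C).mulVecLin = B.mulVecLin ∘ₗ C.mulVecLin := Matrix.mulVecLin_mul _ _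
    have h2 : C.mulVecLin = g := by
      rw [hC]; refine LinearMap.ext fun v => ?_
      rw [Matrix.mulVecLin_apply, ← Matrix.toLin'_apply, Matrix.toLin'_toMatrix']
    have : (B * C).mulVecLin = LinearMap.id := by rw [h1, h2, hg]
    have h3 : ∀ (M : Matrix (Fin k) (Fin N) ℚ), Matrix.toLin' M = M.mulVecLin := by
      intro M; refine LinearMap.ext fun v => ?_; rw [Matrix.toLin'_apply, Matrix.mulVecLin_apply]
    have h4 : ∀ (M : Matrix (Fin k) (Fin k) ℚ), LinearMap.toMatrix' M.mulVecLin = M := by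
      intro M
      have h0 : Matrix.toLin' M = M.mulVecLin := by
        refine LinearMap.ext fun v => ?_; rw [Matrix.toLin'_apply, Matrix.mulVecLin_apply]
      rw [← h0, LinearMap.toMatrix'_toLin']
    have := congrArg LinearMap.toMatrix' this
    rw [LinearMap.toMatrix'_id] at this
    rw [← this]
    have h5 : Matrix.toLin' (B * C) = (B * C).mulVecLin := by
      refine LinearMap.ext fun v => ?_; rw [Matrix.toLin'_apply, Matrix.mulVecLin_apply]
    rw [← h5, LinearMap.toMatrix'_toLin']
  have hBCr : B.map (Rat.castHom ℝ) * C.map (Rat.castHom ℝ) = 1 := by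
    rw [← Matrix.map_mul, hBC]
    exact Matrix.map_one _ (by simp) (by simp)
  rw [Fintype.linearIndependent_iff]
  intro g0 hg0
  have hrow : g0 ᵥ* (B.map (Rat.castHom ℝ)) = 0 := by
    funext j
    have hj := congrFun hg0 j
    simp only [Finset.sum_apply, Pi.smul_apply, smul_eq_mul, coeL_apply, Pi.zero_apply] at hj
    simpa [Matrix.vecMul, dotProduct, Matrix.map_apply, hB] using hj
  have hzero : g0 = 0 := by
    have h6 : (g0 ᵥ* B.map (Rat.castHom ℝ)) ᵥ* C.map (Rat.castHom ℝ)
        = (0 : Fin N → ℝ) ᵥ* C.map (Rat.castHom ℝ) := by rw [hrow]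
    rwa [Matrix.vecMul_vecMul, hBCr, Matrix.vecMul_one, Matrix.zero_vecMul] at h6
  exact fun s => congrFun hzero s

/-- Real span of (the coercion of) a rational subspace. -/
noncomputable def spanR (V : Submodule ℚ (Fin N → ℚ)) : Submodule ℝ (Fin N → ℝ) :=
  Submodule.span ℝ ((fun v : Fin N → ℚ => fun i => (v i : ℝ)) '' (V : Set (Fin N → ℚ)))

theorem spanR_span (S : Set (Fin N → ℚ)) :
    spanR (Submodule.span ℚ S)
      = Submodule.span ℝ ((fun v : Fin N → ℚ => fun i => (v i : ℝ)) '' S) := by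
  apply le_antisymm
  · rw [spanR, Submodule.span_le]
    rintro x ⟨v, hv, rfl⟩
    have h1 : (fun i => ((v i : ℝ))) ∈
        Submodule.map (coeL N) (Submodule.span ℚ S) := ⟨v, hv, rfl⟩
    rw [Submodule.map_span] at h1
    have h2 := Submodule.span_subset_span ℚ ℝ ((coeL N) '' S) h1
    have : (coeL N) '' S = (fun v : Fin N → ℚ => fun i => (v i : ℝ)) '' S := rfl
    rwa [this] at h2
  · exact Submodule.span_mono (Set.image_mono Submodule.subset_span)

theorem spanR_mono {V W : Submodule ℚ (Fin N → ℚ)} (h : V ≤ W) : spanR V ≤ spanR W :=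
  Submodule.span_mono (Set.image_mono h)

/-- A basis of `V` gives a spanning independent family for `spanR V`. -/
theorem finrank_spanR (V : Submodule ℚ (Fin N → ℚ)) :
    Module.finrank ℝ (spanR V) = Module.finrank ℚ V := by
  classical
  set k := Module.finrank ℚ V with hk
  let b : Basis (Fin k) ℚ V := Module.finBasis ℚ V
  set c : Fin k → (Fin N → ℚ) := fun s => (b s : Fin N → ℚ) with hc
  have hci : LinearIndependent ℚ c := b.linearIndependent.map' V.subtype (Submodule.ker_subtype V)
  have hspan : Submodule.span ℚ (Set.range c) = V := by
    have h1 : Submodule.map V.subtype (Submodule.span ℚ (Set.range b)) = V := by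
      rw [b.span_eq, Submodule.map_top, Submodule.range_subtype]
    rw [← h1, Submodule.map_span]
    congr 1
    rw [← Set.range_comp]; rfl
  have hV : spanR V = Submodule.span ℝ (Set.range fun s => coeL N (c s)) := by
    rw [← hspan, spanR_span]
    congr 1
    rw [← Set.range_comp]; rfl
  rw [hV, finrank_span_eq_card (linindep_coe hci)]
  simp

/-- Rational orthogonal complement. -/
def perp (V : Submodule ℚ (Fin N → ℚ)) : Submodule ℚ (Fin N → ℚ) where
  carrier := {w | ∀ v ∈ V, ∑ j, v j * w j = 0}
  add_mem' := by
    intro a c ha hc v hv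
    have : ∀ j ∈ Finset.univ, v j * (a + c) j = v j * a j + v j * c j := by
      intro j _; simp [mul_add]
    rw [Finset.sum_congr rfl this, Finset.sum_add_distrib, ha v hv, hc v hv, add_zero]
  zero_mem' := by intro v _; simp
  smul_mem' := by
    intro t w hw v hv
    have : ∀ j ∈ Finset.univ, v j * (t • w) j = t * (v j * w j) := by
      intro j _; simp [Pi.smul_apply, smul_eq_mul]; ring
    rw [Finset.sum_congr rfl this, ← Finset.mul_sum, hw v hv, mul_zero]

theorem mem_perp {V : Submodule ℚ (Fin N → ℚ)} {w : Fin N → ℚ} :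
    w ∈ perp V ↔ ∀ v ∈ V, ∑ j, v j * w j = 0 := Iff.rfl

theorem exists_basis_family (V : Submodule ℚ (Fin N → ℚ)) :
    ∃ c : Fin (Module.finrank ℚ V) → (Fin N → ℚ),
      LinearIndependent ℚ c ∧ Submodule.span ℚ (Set.range c) = V := by
  classical
  let b : Basis (Fin (Module.finrank ℚ V)) ℚ V := Module.finBasis ℚ V
  refine ⟨fun s => (b s : Fin N → ℚ), b.linearIndependent.map' V.subtype
    (Submodule.ker_subtype V), ?_⟩
  have h1 : Submodule.map V.subtype (Submodule.span ℚ (Set.range b)) = V := by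
    rw [b.span_eq, Submodule.map_top, Submodule.range_subtype]
  calc Submodule.span ℚ (Set.range fun s => (b s : Fin N → ℚ))
      = Submodule.span ℚ (V.subtype '' Set.range b) := by rw [← Set.range_comp]; rfl
    _ = Submodule.map V.subtype (Submodule.span ℚ (Set.range b)) :=
        (Submodule.map_span _ _).symm
    _ = V := h1

theorem finrank_perp (V : Submodule ℚ (Fin N → ℚ)) :
    Module.finrank ℚ (perp V) + Module.finrank ℚ V = N := by
  classical
  obtain ⟨c, hci, hspan⟩ := exists_basis_family V
  set B : Matrix (Fin (Module.finrank ℚ V)) (Fin N) ℚ := Matrix.of c with hB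
  have hker : perp V = LinearMap.ker B.mulVecLin := by
    ext w
    rw [mem_perp, LinearMap.mem_ker]
    constructor
    · intro h
      funext s
      have : (B.mulVecLin w) s = ∑ j, c s j * w j := by
        simp [Matrix.mulVecLin_apply, Matrix.mulVec, dotProduct, hB]
      rw [this, h (c s) (hspan ▸ Submodule.subset_span ⟨s, rfl⟩)]
      rfl
    · intro h v hv
      rw [← hspan] at hv
      induction hv using Submodule.span_induction with
      | mem x hx =>
        obtain ⟨s, rfl⟩ := hx
        have := congrFun h s
        simpa [Matrix.mulVecLin_apply, Matrix.mulVec, dotProduct, hB] using this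
      | zero => simp
      | add x y _ _ hx hy =>
        have : ∀ j ∈ Finset.univ, (x + y) j * w j = x j * w j + y j * w j := by
          intro j _; simp [add_mul]
        rw [Finset.sum_congr rfl this, Finset.sum_add_distrib, hx, hy, add_zero]
      | smul t x _ hx =>
        have : ∀ j ∈ Finset.univ, (t • x) j * w j = t * (x j * w j) := by
          intro j _; simp [Pi.smul_apply, smul_eq_mul]; ring
        rw [Finset.sum_congr rfl this, ← Finset.mul_sum, hx, mul_zero]
  have hrn := LinearMap.finrank_range_add_finrank_ker B.mulVecLin
  have hrange : Module.finrank ℚ (LinearMap.range B.mulVecLin) = Module.finrank ℚ V := by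
    have h := hci.rank_matrix (M := B)
    rw [Matrix.rank] at h
    simpa using h
  have hpi : Module.finrank ℚ (Fin N → ℚ) = N := by simp
  rw [hrange, hpi] at hrn
  rw [hker]
  omega

theorem le_perp_perp (V : Submodule ℚ (Fin N → ℚ)) : V ≤ perp (perp V) := by
  intro v hv w hw
  have h0 := hw v hv
  calc ∑ j, w j * v j = ∑ j, v j * w j := Finset.sum_congr rfl fun j _ => mul_comm _ _
  _ = 0 := h0

theorem perp_perp (V : Submodule ℚ (Fin N → ℚ)) : perp (perp V) = V := by
  have h1 := finrank_perp V
  have h2 := finrank_perp (perp V)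
  exact (Submodule.eq_of_le_of_finrank_le (le_perp_perp V) (by omega)).symm

/-- The real solution set of the rational linear system given by `V`. -/
def Zr (V : Submodule ℚ (Fin N → ℚ)) : Submodule ℝ (Fin N → ℝ) where
  carrier := {x | ∀ v ∈ V, ∑ j, (v j : ℝ) * x j = 0}
  add_mem' := by
    intro a c ha hc v hv
    have : ∀ j ∈ Finset.univ, (v j : ℝ) * (a + c) j = (v j : ℝ) * a j + (v j : ℝ) * c j := by
      intro j _; simp [mul_add]
    rw [Finset.sum_congr rfl this, Finset.sum_add_distrib, ha v hv, hc v hv, add_zero]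
  zero_mem' := by intro v _; simp
  smul_mem' := by
    intro t x hx v hv
    have : ∀ j ∈ Finset.univ, (v j : ℝ) * (t • x) j = t * ((v j : ℝ) * x j) := by
      intro j _; simp [Pi.smul_apply, smul_eq_mul]; ring
    rw [Finset.sum_congr rfl this, ← Finset.mul_sum, hx v hv, mul_zero]

theorem mem_Zr {V : Submodule ℚ (Fin N → ℚ)} {x : Fin N → ℝ} :
    x ∈ Zr V ↔ ∀ v ∈ V, ∑ j, (v j : ℝ) * x j = 0 := Iff.rfl

theorem Zr_antitone {V W : Submodule ℚ (Fin N → ℚ)} (h : V ≤ W) : Zr W ≤ Zr V :=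
  fun _ hx v hv => hx v (h hv)

theorem spanR_perp_le_Zr (V : Submodule ℚ (Fin N → ℚ)) : spanR (perp V) ≤ Zr V := by
  rw [spanR, Submodule.span_le]
  rintro x ⟨w, hw, rfl⟩ v hv
  have h0 : ∑ j, v j * w j = 0 := hw v hv
  have : ((∑ j, v j * w j : ℚ) : ℝ) = 0 := by rw [h0]; norm_num
  push_cast at this
  exact this

theorem spanR_perp_eq_Zr (V : Submodule ℚ (Fin N → ℚ)) : spanR (perp V) = Zr V := by
  classical
  obtain ⟨c, hci, hspan⟩ := exists_basis_family V
  set Br : Matrix (Fin (Module.finrank ℚ V)) (Fin N) ℝ :=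
    Matrix.of (fun s j => (c s j : ℝ)) with hBr
  have hZk : Zr V ≤ LinearMap.ker Br.mulVecLin := by
    intro x hx
    rw [LinearMap.mem_ker]
    funext s
    have : (Br.mulVecLin x) s = ∑ j, (c s j : ℝ) * x j := by
      simp [Matrix.mulVecLin_apply, Matrix.mulVec, dotProduct, hBr]
    rw [this, hx (c s) (hspan ▸ Submodule.subset_span ⟨s, rfl⟩)]
    rfl
  have hrn := LinearMap.finrank_range_add_finrank_ker Br.mulVecLin
  have hri : LinearIndependent ℝ (fun s => coeL N (c s)) := linindep_coe hci
  have hrange : Module.finrank ℝ (LinearMap.range Br.mulVecLin) = Module.finrank ℚ V := by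
    have h := hri.rank_matrix (M := Br)
    rw [Matrix.rank] at h
    simpa using h
  have hpi : Module.finrank ℝ (Fin N → ℝ) = N := by simp
  rw [hrange, hpi] at hrn
  have hZdim : Module.finrank ℝ (Zr V) + Module.finrank ℚ V ≤ N := by
    have := Submodule.finrank_mono hZk
    omega
  have hSdim : Module.finrank ℝ (spanR (perp V)) + Module.finrank ℚ V = N := by
    rw [finrank_spanR]
    exact finrank_perp V
  exact Submodule.eq_of_le_of_finrank_le (spanR_perp_le_Zr V) (by omega)


end RatLiftAux

/-- Every real `d × N` matrix `A` has a unique minimal rational lift: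
there is a unique rational subspace `L̂ ⊆ ℝ^N` containing `Row(A)` with
`dim L̂ = ρ(A)`, and `L̂` is contained in every rational subspace containing `Row(A)`. -/
theorem exists_unique_minimal_rational_lift {d N : ℕ}
    (A : Matrix (Fin d) (Fin N) ℝ) :
    ∃ Lhat : Submodule ℝ (Fin N → ℝ),
      (IsRationalSubspace Lhat ∧
        Submodule.span ℝ (Set.range fun i : Fin d => A i) ≤ Lhat ∧
        Module.finrank ℝ Lhat = latticeRank A) ∧
      (∀ L : Submodule ℝ (Fin N → ℝ), IsRationalSubspace L →
        Submodule.span ℝ (Set.range fun i : Fin d => A i) ≤ L → Lhat ≤ L) ∧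
      (∀ L : Submodule ℝ (Fin N → ℝ),
        IsRationalSubspace L →
        Submodule.span ℝ (Set.range fun i : Fin d => A i) ≤ L →
        Module.finrank ℝ L = latticeRank A → L = Lhat) := by
  classical
  let φ : (Fin N → ℚ) →ₗ[ℚ] (Fin d → ℝ) :=
    (A.mulVecLin.restrictScalars ℚ) ∘ₗ (RatLiftAux.coeL N)
  have hφ : ∀ q i, φ q i = ∑ j, A i j * (q j : ℝ) := by
    intro q i
    show (A.mulVecLin fun i => ((q i : ℝ))) i = _
    simp [Matrix.mulVecLin_apply, Matrix.mulVec, dotProduct]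
  set K : Submodule ℚ (Fin N → ℚ) := LinearMap.ker φ with hK
  have hrangeφ : LinearMap.range φ
      = Submodule.span ℚ (Set.range fun j : Fin N => fun i : Fin d => A i j) := by
    apply le_antisymm
    · rintro _ ⟨q, rfl⟩
      have he : φ q = ∑ j, q j • (fun i : Fin d => A i j) := by
        funext i
        rw [hφ, Finset.sum_apply]
        exact Finset.sum_congr rfl fun j _ => by
          simp [Pi.smul_apply, Rat.smul_def]; ring
      rw [he]
      exact Submodule.sum_mem _ fun j _ =>
        Submodule.smul_mem _ _ (Submodule.subset_span ⟨j, rfl⟩)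
    · rw [Submodule.span_le]
      rintro _ ⟨j, rfl⟩
      refine ⟨Pi.single j 1, ?_⟩
      funext i
      rw [hφ]
      have h : ∀ j' ∈ Finset.univ, A i j' * (((Pi.single j 1 : Fin N → ℚ) j' : ℚ) : ℝ)
          = if j' = j then A i j' else 0 := by
        intro j' _
        by_cases hj : j' = j <;> simp [Pi.single_apply, hj]
      rw [Finset.sum_congr rfl h, Finset.sum_ite_eq']
      simp
  have hlat : latticeRank A = Module.finrank ℚ (LinearMap.range φ) := by
    rw [latticeRank, ← hrangeφ]
  have hrn := LinearMap.finrank_range_add_finrank_ker φ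
  have hpi : Module.finrank ℚ (Fin N → ℚ) = N := by simp
  rw [hpi] at hrn
  -- the candidate
  have hdim : Module.finrank ℝ (RatLiftAux.Zr K) = latticeRank A := by
    rw [← RatLiftAux.spanR_perp_eq_Zr, RatLiftAux.finrank_spanR, hlat]
    have hp := RatLiftAux.finrank_perp K
    rw [← hK] at hrn
    omega
  have hmin : ∀ L : Submodule ℝ (Fin N → ℝ), IsRationalSubspace L →
      Submodule.span ℝ (Set.range fun i : Fin d => A i) ≤ L → RatLiftAux.Zr K ≤ L := by
    rintro L ⟨S, hS⟩ hRowL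
    set V : Submodule ℚ (Fin N → ℚ) := Submodule.span ℚ S with hV
    have hLV : L = RatLiftAux.spanR V := hS.trans (RatLiftAux.spanR_span S).symm
    have hVZ : RatLiftAux.spanR V = RatLiftAux.Zr (RatLiftAux.perp V) :=
      (congrArg RatLiftAux.spanR (RatLiftAux.perp_perp V)).symm.trans
        (RatLiftAux.spanR_perp_eq_Zr (RatLiftAux.perp V))
    have hperpK : RatLiftAux.perp V ≤ K := by
      intro w hw
      have hmem : ∀ i : Fin d, A i ∈ RatLiftAux.Zr (RatLiftAux.perp V) := by
        intro i
        have hi := hRowL (Submodule.subset_span ⟨i, rfl⟩)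
        rwa [hLV, hVZ] at hi
      rw [hK, LinearMap.mem_ker]
      funext i
      have h0 := (RatLiftAux.mem_Zr.mp (hmem i)) w hw
      show φ w i = 0
      rw [hφ]
      calc ∑ j, A i j * (w j : ℝ) = ∑ j, (w j : ℝ) * A i j :=
          Finset.sum_congr rfl fun j _ => mul_comm _ _
        _ = 0 := h0
    have hZle := RatLiftAux.Zr_antitone hperpK
    rw [hLV, hVZ]
    exact hZle
  refine ⟨RatLiftAux.Zr K, ⟨?_, ?_, hdim⟩, hmin, ?_⟩
  · exact ⟨(RatLiftAux.perp K : Set (Fin N → ℚ)), (RatLiftAux.spanR_perp_eq_Zr K).symm⟩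
  · rw [Submodule.span_le]
    rintro _ ⟨i, rfl⟩
    rw [SetLike.mem_coe, RatLiftAux.mem_Zr]
    intro q hq
    have h0 : φ q i = 0 := congrFun (LinearMap.mem_ker.mp hq) i
    rw [hφ] at h0
    calc ∑ j, (q j : ℝ) * A i j = ∑ j, A i j * (q j : ℝ) :=
        Finset.sum_congr rfl fun j _ => mul_comm _ _
      _ = 0 := h0
  · intro L hr hrow hd
    exact (Submodule.eq_of_le_of_finrank_le (hmin L hr hrow) (by rw [hd, hdim])).symm
end

section
/- Let α₁, …, α_N ∈ ℝ^{1+n}, κ₁, …, κ_N ∈ ℝ^k, and c₁, …, c_N ∈ ℂ, and assume there exists ξ ∈ ℝ^{1+n} with ⟨ξ, α_j⟩ = 1 for all j (pseudo-homogeneity). For λ ∈ ℝ define the exponential sum f_λ(z, t) = Σ_{j=1}^N c_j · exp(⟨z, α_j⟩ + λ⟨t, κ_j⟩) for (z, t) ∈ ℂ^{1+n} × ℂ^k, and define g(z, t) = Σ_{j=1}^N c_j · exp(⟨z, α_j⟩ + ⟨t, κ_j⟩). Let (λ_q) be a sequence of nonzero real numbers with λ_q → 0, and let (p_q) be a sequence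 of points with p_q ∈ 𝒜(f_{λ_q}) ⊆ ℝ^{1+n} × ℝ^k converging to a point (x*, t*) ∈ ℝ^{1+n} × ℝ^k. Then (x*, 0) ∈ 𝒜(g); in particular every limit point of amoebas along the deformation lies in 𝒜_B(f) × ℝ^k, where 𝒜_B(f) = {x ∈ ℝ^{1+n} : (x, 0) ∈ 𝒜(g)}. -/
open scoped BigOperators

/-- The amoeba of the deformed exponential sum
`f_λ(z, t) = Σ_j c_j exp(⟨z, α_j⟩ + λ⟨t, κ_j⟩)` on `ℂ^{1+n} × ℂ^k`:
the closure in `ℝ^{1+n} × ℝ^k` of the set of real parts of points of its zero set. -/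
noncomputable def deformAmoeba {n k N : ℕ} (c : Fin N → ℂ)
    (α : Fin N → Fin (1 + n) → ℝ) (κ : Fin N → Fin k → ℝ) (lam : ℝ) :
    Set ((Fin (1 + n) → ℝ) × (Fin k → ℝ)) :=
  closure {p : (Fin (1 + n) → ℝ) × (Fin k → ℝ) |
    ∃ (z : Fin (1 + n) → ℂ) (t : Fin k → ℂ),
      (∑ j : Fin N, c j * Complex.exp
        ((∑ i, z i * (α j i : ℂ)) + (lam : ℂ) * ∑ l, t l * (κ j l : ℂ))) = 0 ∧
      (fun i => (z i).re) = p.1 ∧ (fun l => (t l).re) = p.2}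

/-- With `f_λ` the deformation of the pseudo-homogeneous exponential sum
`f` in directions `κ_j`, and `g = f_1`, every limit of points `p_q ∈ 𝒜(f_{λ_q})` with
`λ_q ≠ 0` and `λ_q → 0` has the form `(x*, t*)` with `(x*, 0) ∈ 𝒜(g)`; i.e. all such
limit points lie in `𝒜_B(f) × ℝ^k`. -/
theorem limit_point_in_caisson {n k N : ℕ} (c : Fin N → ℂ)
    (α : Fin N → Fin (1 + n) → ℝ) (κ : Fin N → Fin k → ℝ)
    (ξ : Fin (1 + n) → ℝ) (hξ : ∀ j, ∑ i, ξ i * α j i = 1)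
    (lam : ℕ → ℝ) (hlam0 : ∀ q, lam q ≠ 0)
    (hlam : Filter.Tendsto lam Filter.atTop (nhds 0))
    (p : ℕ → (Fin (1 + n) → ℝ) × (Fin k → ℝ))
    (hp : ∀ q, p q ∈ deformAmoeba c α κ (lam q))
    (xstar : Fin (1 + n) → ℝ) (tstar : Fin k → ℝ)
    (hconv : Filter.Tendsto p Filter.atTop (nhds (xstar, tstar))) :
    (xstar, (fun _ => 0 : Fin k → ℝ)) ∈ deformAmoeba c α κ 1 := by
  classical
  have hsel : ∀ q : ℕ, ∃ s : (Fin (1 + n) → ℝ) × (Fin k → ℝ),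
      (∃ (z : Fin (1 + n) → ℂ) (t : Fin k → ℂ),
        (∑ j : Fin N, c j * Complex.exp
          ((∑ i, z i * (α j i : ℂ)) + (lam q : ℂ) * ∑ l, t l * (κ j l : ℂ))) = 0 ∧
        (fun i => (z i).re) = s.1 ∧ (fun l => (t l).re) = s.2) ∧
      dist s (p q) < 1 / (q + 1) := by
    intro q
    have h := hp q
    rw [deformAmoeba, Metric.mem_closure_iff] at h
    obtain ⟨s, hs, hd⟩ := h (1 / (q + 1)) (by positivity)
    exact ⟨s, hs, by rwa [dist_comm]⟩
  choose s hsS hsd using hsel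
  have hdist0 : Filter.Tendsto (fun q => dist (p q) (s q)) Filter.atTop (nhds 0) := by
    have h1 : Filter.Tendsto (fun q : ℕ => 1 / ((q : ℝ) + 1)) Filter.atTop (nhds 0) :=
      tendsto_one_div_add_atTop_nhds_zero_nat
    refine squeeze_zero (fun q => dist_nonneg) (fun q => ?_) h1
    rw [dist_comm]
    exact (hsd q).le
  have hs_lim : Filter.Tendsto s Filter.atTop (nhds (xstar, tstar)) :=
    hconv.congr_dist hdist0
  have hs1 : Filter.Tendsto (fun q => (s q).1) Filter.atTop (nhds xstar) :=
    (continuous_fst.continuousAt.tendsto).comp hs_lim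
  have hs2 : Filter.Tendsto (fun q => (s q).2) Filter.atTop (nhds tstar) :=
    (continuous_snd.continuousAt.tendsto).comp hs_lim
  set u : ℕ → (Fin (1 + n) → ℝ) × (Fin k → ℝ) :=
    fun q => ((s q).1, fun l => lam q * (s q).2 l) with hu
  have hu_lim : Filter.Tendsto u Filter.atTop
      (nhds (xstar, (fun _ => 0 : Fin k → ℝ))) := by
    refine Filter.Tendsto.prodMk_nhds hs1 ?_
    rw [tendsto_pi_nhds]
    intro l
    have : Filter.Tendsto (fun q => lam q * (s q).2 l) Filter.atTop
        (nhds (0 * tstar l)) :=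
      hlam.mul ((continuous_apply l).continuousAt.tendsto.comp hs2)
    simpa using this
  have hu_mem : ∀ q, u q ∈ {p : (Fin (1 + n) → ℝ) × (Fin k → ℝ) |
      ∃ (z : Fin (1 + n) → ℂ) (t : Fin k → ℂ),
        (∑ j : Fin N, c j * Complex.exp
          ((∑ i, z i * (α j i : ℂ)) + ((1 : ℝ) : ℂ) * ∑ l, t l * (κ j l : ℂ))) = 0 ∧
        (fun i => (z i).re) = p.1 ∧ (fun l => (t l).re) = p.2} := by
    intro q
    obtain ⟨z, t, hzero, hz, ht⟩ := hsS q
    refine ⟨z, fun l => (lam q : ℂ) * t l, ?_, hz, ?_⟩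
    · have : ∀ j, ∑ l, ((lam q : ℂ) * t l) * (κ j l : ℂ)
          = (lam q : ℂ) * ∑ l, t l * (κ j l : ℂ) := by
        intro j
        rw [Finset.mul_sum]
        exact Finset.sum_congr rfl fun l _ => by ring
      simp only [this, Complex.ofReal_one, one_mul]
      exact hzero
    · funext l
      have := congrFun ht l
      simp only [Complex.mul_re, Complex.ofReal_re, Complex.ofReal_im, zero_mul, sub_zero]
      rw [this]
  exact mem_closure_of_tendsto hu_lim (Filter.Eventually.of_forall hu_mem)
end

section
/- For all real numbers φ₁ and φ₂, the complex number c = exp(i(−4φ₁ − 2φ₂)) + exp(i(−φ₁ + 4φ₂)) + exp(i(5φ₁ − 2φ₂)) satisfies −27 + 18|c|² + |c|⁴ − 8·Re(c³) ≤ 0. -/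
open Complex

lemma hypo_aux (u v w : ℂ) (h1 : u * v * w = 1)
    (hcu : (starRingEnd ℂ) u = v * w) (hcv : (starRingEnd ℂ) v = w * u)
    (hcw : (starRingEnd ℂ) w = u * v) :
    -27 + 18 * ‖u + v + w‖ ^ 2 + ‖u + v + w‖ ^ 4
      - 8 * ((u + v + w) ^ 3).re ≤ 0 := by
  set c := u + v + w with hc
  have hcc : (starRingEnd ℂ) c = u * v + v * w + w * u := by
    rw [hc, map_add, map_add, hcu, hcv, hcw]; ring
  set P := (u - v) * (v - w) * (w - u) with hP
  have key : (-27 : ℂ) + 18 * (c * (starRingEnd ℂ) c) + (c * (starRingEnd ℂ) c) ^ 2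
      - 4 * (c ^ 3 + ((starRingEnd ℂ) c) ^ 3) = P ^ 2 := by
    rw [hcc, hc, hP]
    linear_combination (27 * (1 + u * v * w) - 18 * (u + v + w) * (u * v + v * w + w * u)
      + 4 * (u + v + w) ^ 3) * h1
  have hPc : (starRingEnd ℂ) P = -P := by
    rw [hP, map_mul, map_mul, map_sub, map_sub, map_sub, hcu, hcv, hcw]
    linear_combination (-(u - v) * (v - w) * (w - u)) * h1
  have hPre : P.re = 0 := by
    have h := congrArg Complex.re hPc
    simp only [Complex.conj_re, Complex.neg_re] at h
    linarith
  have h1' : c * (starRingEnd ℂ) c = (Complex.normSq c : ℂ) := Complex.mul_conj c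
  have h2' : c ^ 3 + ((starRingEnd ℂ) c) ^ 3 = ((2 * (c ^ 3).re : ℝ) : ℂ) := by
    rw [← map_pow]; exact Complex.add_conj (c ^ 3)
  rw [h1', h2'] at key
  have hre := congrArg Complex.re key
  simp only [Complex.add_re, Complex.sub_re, Complex.mul_re, Complex.neg_re,
    Complex.ofReal_re, Complex.ofReal_im, Complex.ofReal_pow, sq, Complex.mul_im,
    Complex.re_ofNat, Complex.im_ofNat] at hre
  have habs : ‖c‖ ^ 2 = Complex.normSq c := Complex.sq_norm c
  have h4 : ‖c‖ ^ 4 = Complex.normSq c * Complex.normSq c := by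
    rw [show (4:ℕ) = 2*2 from rfl, pow_mul, habs, sq]
  rw [habs, h4]
  nlinarith [sq_nonneg P.im, hre, hPre]

/-- For all real `φ₁, φ₂`, the complex number
`c = exp(i(−4φ₁ − 2φ₂)) + exp(i(−φ₁ + 4φ₂)) + exp(i(5φ₁ − 2φ₂))`
satisfies `−27 + 18|c|² + |c|⁴ − 8·Re(c³) ≤ 0`. -/
theorem hypocycloid_region_bound (φ₁ φ₂ : ℝ) (c : ℂ)
    (hc : c = Complex.exp (Complex.I * ((-4 : ℝ) * φ₁ + (-2 : ℝ) * φ₂)) +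
      Complex.exp (Complex.I * ((-1 : ℝ) * φ₁ + (4 : ℝ) * φ₂)) +
      Complex.exp (Complex.I * ((5 : ℝ) * φ₁ + (-2 : ℝ) * φ₂))) :
    -27 + 18 * ‖c‖ ^ 2 + ‖c‖ ^ 4 - 8 * (c ^ 3).re ≤ 0 := by
  rw [hc]
  apply hypo_aux
  · rw [← Complex.exp_add, ← Complex.exp_add, ← Complex.exp_zero]
    congr 1
    push_cast
    ring
  · rw [← Complex.exp_conj, ← Complex.exp_add]
    congr 1
    simp only [map_mul, map_add, Complex.conj_I, Complex.conj_ofReal]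
    push_cast
    ring
  · rw [← Complex.exp_conj, ← Complex.exp_add]
    congr 1
    simp only [map_mul, map_add, Complex.conj_I, Complex.conj_ofReal]
    push_cast
    ring
  · rw [← Complex.exp_conj, ← Complex.exp_add]
    congr 1
    simp only [map_mul, map_add, Complex.conj_I, Complex.conj_ofReal]
    push_cast
    ring
end

section
/- For all real numbers r > 3 and all θ ∈ ℝ, one has −27 + 18r² + r⁴ − 8r³·cos(3θ) > 0. (Consequently, the hypocycloid certificate |c| = r, h(r, θ) > 0 strictly improves the lopsidedness certificate |c| > 3 for the polynomial 1 + w³ + c·w⁴ + w⁹.) -/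
/-- For all real `r > 3` and all `θ`, the hypocycloid function
`h(r, θ) = −27 + 18r² + r⁴ − 8r³·cos(3θ)` is strictly positive. -/
theorem hypocycloid_positive_of_gt_three (r θ : ℝ) (hr : 3 < r) :
    0 < -27 + 18 * r ^ 2 + r ^ 4 - 8 * r ^ 3 * Real.cos (3 * θ) := by
  have hc : Real.cos (3 * θ) ≤ 1 := Real.cos_le_one _
  nlinarith [pow_pos (show (0:ℝ) < r - 3 by linarith) 3, sq_nonneg (r-3),
    mul_pos (mul_pos (show (0:ℝ) < r-3 by linarith) (show (0:ℝ) < r-3 by linarith)) (show (0:ℝ) < r-3 by linarith)]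
end

section
/- For all φ = (φ₁, φ₂, φ₃) ∈ ℝ³, the complex number c = exp(i(−3φ₁ − 3φ₂ − φ₃)) + exp(i(−φ₁ − φ₂ + 3φ₃)) + exp(i(φ₁ + 3φ₂ − φ₃)) + exp(i(3φ₁ + φ₂ − φ₃)) satisfies −4096 + 768|c|² + 6|c|⁴ + |c|⁶ − 54·Re(c⁴) ≤ 0. -/
open Complex

private lemma cert0_nonneg (p q w : ℝ) (hp : 0 ≤ p) (hq : 0 ≤ q) (hw : 0 ≤ w) :
    0 ≤ w^5 + 6*q*w^4 + 12*q^2*w^3 + 8*q^3*w^2 + 6*p*w^4 + 30*p*q*w^3 + 48*p*q^2*w^2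
      + 24*p*q^3*w + 15*p^2*w^3 + 60*p^2*q*w^2 + 72*p^2*q^2*w + 24*p^2*q^3 + 12*p^3*w^2
      + 36*p^3*q*w + 24*p^3*q^2 + 3*p^4*w + 6*p^4*q := by
  obtain ⟨a, rfl⟩ : ∃ a, p = a^2 := ⟨Real.sqrt p, (Real.sq_sqrt hp).symm⟩
  obtain ⟨b, rfl⟩ : ∃ b, q = b^2 := ⟨Real.sqrt q, (Real.sq_sqrt hq).symm⟩
  obtain ⟨d, rfl⟩ : ∃ d, w = d^2 := ⟨Real.sqrt w, (Real.sq_sqrt hw).symm⟩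
  positivity

private lemma cert1_nonneg (p q w : ℝ) (hp : 0 ≤ p) (hq : 0 ≤ q) (hw : 0 ≤ w) :
    0 ≤ 3*w^5 + 18*q*w^4 + 39*q^2*w^3 + 36*q^3*w^2 + 12*q^4*w + 18*p*w^4 + 90*p*q*w^3
      + 156*p*q^2*w^2 + 108*p*q^3*w + 24*p*q^4 + 57*p^2*w^3 + 228*p^2*q*w^2
      + 285*p^2*q^2*w + 114*p^2*q^3 + 66*p^3*w^2 + 198*p^3*q*w + 132*p^3*q^2
      + 27*p^4*w + 54*p^4*q := by
  obtain ⟨a, rfl⟩ : ∃ a, p = a^2 := ⟨Real.sqrt p, (Real.sq_sqrt hp).symm⟩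
  obtain ⟨b, rfl⟩ : ∃ b, q = b^2 := ⟨Real.sqrt q, (Real.sq_sqrt hq).symm⟩
  obtain ⟨d, rfl⟩ : ∃ d, w = d^2 := ⟨Real.sqrt w, (Real.sq_sqrt hw).symm⟩
  positivity

private lemma cert2_nonneg (p q w : ℝ) (hp : 0 ≤ p) (hq : 0 ≤ q) (hw : 0 ≤ w) :
    0 ≤ 3*w^5 + 18*q*w^4 + 42*q^2*w^3 + 48*q^3*w^2 + 27*q^4*w + 6*q^5 + 12*p*w^4
      + 60*p*q*w^3 + 108*p*q^2*w^2 + 84*p*q^3*w + 24*p*q^4 + 39*p^2*w^3 + 156*p^2*q*w^2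
      + 195*p^2*q^2*w + 78*p^2*q^3 + 54*p^3*w^2 + 162*p^3*q*w + 108*p^3*q^2
      + 27*p^4*w + 54*p^4*q := by
  obtain ⟨a, rfl⟩ : ∃ a, p = a^2 := ⟨Real.sqrt p, (Real.sq_sqrt hp).symm⟩
  obtain ⟨b, rfl⟩ : ∃ b, q = b^2 := ⟨Real.sqrt q, (Real.sq_sqrt hq).symm⟩
  obtain ⟨d, rfl⟩ : ∃ d, w = d^2 := ⟨Real.sqrt w, (Real.sq_sqrt hw).symm⟩
  positivity

private lemma key_poly (p q t : ℝ) (hp : 0 ≤ p) (hq : 0 ≤ q) (hpq : p + q ≤ 4)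
    (ht : 0 ≤ t) (ht1 : t ≤ 1) :
    432*p^2*q^2*(t*(1-t)) ≤ (16 - p^2*t - q^2*(1-t))^3 := by
  have hw : 0 ≤ 4 - p - q := by linarith
  have ht' : 0 ≤ 1 - t := by linarith
  have hp4 : 0 ≤ 4 - p := by linarith
  have hp8 : 0 ≤ 8 - p := by linarith
  have hp4' : 0 ≤ 4 + p := by linarith
  have h0 := cert0_nonneg p q (4-p-q) hp hq hw
  have h1 := cert1_nonneg p q (4-p-q) hp hq hw
  have h2 := cert2_nonneg p q (4-p-q) hp hq hw
  have hT1 : 0 ≤ (p-4*t)^2*((1-t)*(p*(8-p)^3)) :=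
    mul_nonneg (sq_nonneg _) (mul_nonneg ht' (mul_nonneg hp (pow_nonneg hp8 3)))
  have hT2 : 0 ≤ (p-4*t)^2*(t*((4-p)*(4+p)^3)) :=
    mul_nonneg (sq_nonneg _) (mul_nonneg ht (mul_nonneg hp4 (pow_nonneg hp4' 3)))
  have hT3 := mul_nonneg hw (mul_nonneg ht'
    (add_nonneg (add_nonneg (mul_nonneg (pow_nonneg ht' 2) h0)
      (mul_nonneg (mul_nonneg ht ht') h1)) (mul_nonneg (pow_nonneg ht 2) h2)))
  nlinarith [hT1, hT2, hT3]

private lemma key2 (u v C S : ℝ) (huv : |u| + |v| ≤ 4) (hCS : C^2 + S^2 = 1) :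
    432*(u*C)^2*(v*S)^2 ≤ (16 - (u*C)^2 - (v*S)^2)^3 := by
  have hkey := key_poly |u| |v| (C^2) (abs_nonneg u) (abs_nonneg v) huv (sq_nonneg C)
    (by nlinarith [sq_nonneg S])
  rw [_root_.sq_abs, _root_.sq_abs] at hkey
  have hS : S^2 = 1 - C^2 := by linarith
  calc 432*(u*C)^2*(v*S)^2 = 432*u^2*v^2*(C^2*(1-C^2)) := by rw [mul_pow, mul_pow, hS]; ring
    _ ≤ (16 - u^2*C^2 - v^2*(1-C^2))^3 := hkey
    _ = (16 - (u*C)^2 - (v*S)^2)^3 := by rw [mul_pow, mul_pow, hS]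

private lemma cos_helper (μ α β : ℝ) :
    Real.cos (μ+α) + Real.cos (μ-α) + Real.cos (β-μ) + Real.cos (-(μ+β)) =
      (2*Real.cos α + 2*Real.cos β) * Real.cos μ := by
  simp [Real.cos_add, Real.cos_sub, Real.cos_neg]
  ring

private lemma sin_helper (μ α β : ℝ) :
    Real.sin (μ+α) + Real.sin (μ-α) + Real.sin (β-μ) + Real.sin (-(μ+β)) =
      (2*Real.cos α - 2*Real.cos β) * Real.sin μ := by
  simp [Real.sin_add, Real.sin_sub, Real.sin_neg]
  ring

/-- For all real `φ₁, φ₂, φ₃`, the complex number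
`c = exp(i(−3φ₁ − 3φ₂ − φ₃)) + exp(i(−φ₁ − φ₂ + 3φ₃)) + exp(i(φ₁ + 3φ₂ − φ₃)) + exp(i(3φ₁ + φ₂ − φ₃))`
satisfies `−4096 + 768|c|² + 6|c|⁴ + |c|⁶ − 54·Re(c⁴) ≤ 0`. -/
theorem hypocycloid_region_bound_bivariate (φ₁ φ₂ φ₃ : ℝ) (c : ℂ)
    (hc : c =
      Complex.exp (Complex.I * ((-3 : ℝ) * φ₁ + (-3 : ℝ) * φ₂ + (-1 : ℝ) * φ₃)) +
      Complex.exp (Complex.I * ((-1 : ℝ) * φ₁ + (-1 : ℝ) * φ₂ + (3 : ℝ) * φ₃)) +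
      Complex.exp (Complex.I * ((1 : ℝ) * φ₁ + (3 : ℝ) * φ₂ + (-1 : ℝ) * φ₃)) +
      Complex.exp (Complex.I * ((3 : ℝ) * φ₁ + (1 : ℝ) * φ₂ + (-1 : ℝ) * φ₃))) :
    -4096 + 768 * ‖c‖ ^ 2 + 6 * ‖c‖ ^ 4 + ‖c‖ ^ 6
      - 54 * (c ^ 4).re ≤ 0 := by
  set μ : ℝ := -2*φ₁ - 2*φ₂ + φ₃ with hμ
  set α : ℝ := -φ₁ - φ₂ - 2*φ₃ with hα
  set β : ℝ := -φ₁ + φ₂ with hβ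
  set u : ℝ := 2*Real.cos α + 2*Real.cos β with hu
  set v : ℝ := 2*Real.cos α - 2*Real.cos β with hv
  have e1 : -(3*φ₁) + -(3*φ₂) + -φ₃ = μ + α := by rw [hμ, hα]; ring
  have e2 : -φ₁ + -φ₂ + 3*φ₃ = μ - α := by rw [hμ, hα]; ring
  have e3 : φ₁ + 3*φ₂ + -φ₃ = β - μ := by rw [hμ, hβ]; ring
  have e4 : 3*φ₁ + φ₂ + -φ₃ = -(μ + β) := by rw [hμ, hβ]; ring
  have hre : c.re = u * Real.cos μ := by
    rw [hc]
    simp only [Complex.add_re, Complex.exp_re, Complex.mul_re, Complex.mul_im,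
      Complex.I_re, Complex.I_im, Complex.add_im, Complex.ofReal_re, Complex.ofReal_im]
    norm_num
    rw [e1, e2, e3, e4, hu]
    exact cos_helper μ α β
  have him : c.im = v * Real.sin μ := by
    rw [hc]
    simp only [Complex.add_im, Complex.exp_im, Complex.mul_re, Complex.mul_im,
      Complex.I_re, Complex.I_im, Complex.add_re, Complex.ofReal_re, Complex.ofReal_im]
    norm_num
    rw [e1, e2, e3, e4, hv]
    exact sin_helper μ α β
  have huv : |u| + |v| ≤ 4 := by
    rcases abs_cases u with ⟨h1, _⟩ | ⟨h1, _⟩ <;> rcases abs_cases v with ⟨h2, _⟩ | ⟨h2, _⟩ <;>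
      rw [h1, h2] <;>
      rw [hu, hv] <;>
      linarith [Real.cos_le_one α, Real.neg_one_le_cos α, Real.cos_le_one β,
        Real.neg_one_le_cos β]
  have hmain := key2 u v (Real.cos μ) (Real.sin μ) huv (Real.cos_sq_add_sin_sq μ)
  rw [← hre, ← him] at hmain
  have habs : ‖c‖ ^ 2 = c.re^2 + c.im^2 := by
    rw [Complex.sq_norm, Complex.normSq_apply]; ring
  have habs4 : ‖c‖ ^ 4 = (c.re^2 + c.im^2)^2 := by
    rw [show (4:ℕ) = 2*2 from rfl, pow_mul, habs]
  have habs6 : ‖c‖ ^ 6 = (c.re^2 + c.im^2)^3 := by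
    rw [show (6:ℕ) = 2*3 from rfl, pow_mul, habs]
  have hre4 : (c^4).re = c.re^4 - 6*c.re^2*c.im^2 + c.im^4 := by
    have h4 : c^4 = c*c*(c*c) := by ring
    rw [h4]
    simp [Complex.mul_re, Complex.mul_im]
    ring
  rw [habs, habs4, habs6, hre4]
  nlinarith [hmain]
end
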